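/- Let G be a connected claw-free cubic graph that has a good decomposition with spanning tree T, and let C be a cycle of G that uses no edge of T. If C is not a triangle, then C is chordless, i.e., no edge of G joins two non-consecutive vertices of C. -/

import Mathlib

open SimpleGraph

variable {V : Type*}

/-- A graph is claw-free if it has no induced subgraph isomorphic to `K_{1,3}`:
there are no four vertices `v, a, b, c` with `v` adjacent to the pairwise distinct,
pairwise non-adjacent vertices `a, b, c`. -/
def IsClawFree (G : SimpleGraph V) : Prop :=
  ¬ ∃ v a b c : V, G.Adj v a ∧ G.Adj v b ∧ G.Adj v c ∧
    a ≠ b ∧ a ≠ c ∧ b ≠ c ∧ ¬ G.Adj a b ∧ ¬ G.Adj a c ∧ ¬ G.Adj b c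

/-- A graph is cubic if every vertex has degree three. -/
def IsCubic (G : SimpleGraph V) : Prop :=
  ∀ v : V, (G.neighborSet v).ncard = 3

/-- A graph (viewed as an edge set) is a matching if every vertex has at most one neighbour. -/
def IsMatchingGraph (M : SimpleGraph V) : Prop :=
  ∀ ⦃v w w' : V⦄, M.Adj v w → M.Adj v w' → w = w'

/-- A (nonempty) 2-regular subgraph: it has at least one edge, and every vertex incident
with an edge has exactly two neighbours. -/
def IsTwoRegularGraph (O : SimpleGraph V) : Prop :=
  O.edgeSet.Nonempty ∧ ∀ v ∈ O.support, (O.neighborSet v).ncard = 2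

/-- A good decomposition of `G`: the edge set of `G` is partitioned into the edge set of a
spanning tree `T`, a matching `M` (possibly empty), and the edge set of a 2-regular
subgraph `O`. -/
def IsGoodDecomposition (G T M O : SimpleGraph V) : Prop :=
  T ≤ G ∧ M ≤ G ∧ O ≤ G ∧
  T.IsTree ∧ IsMatchingGraph M ∧ IsTwoRegularGraph O ∧
  T.edgeSet ∪ M.edgeSet ∪ O.edgeSet = G.edgeSet ∧
  Disjoint T.edgeSet M.edgeSet ∧ Disjoint T.edgeSet O.edgeSet ∧
  Disjoint M.edgeSet O.edgeSet

private lemma edges_getElem_aux {G : SimpleGraph V} {x y : V} (p : G.Walk x y) (i : ℕ)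
    (hi : i < p.length) :
    p.edges[i]'(by rw [p.length_edges]; exact hi) = s(p.getVert i, p.getVert (i+1)) := by
  induction p generalizing i with
  | nil => simp at hi
  | cons h q ih =>
    cases i with
    | zero => simp [Walk.getVert]
    | succ n =>
      have := ih n (by simpa using hi)
      simpa [Walk.getVert_cons_succ] using this

/-- every vertex on a cycle has two distinct cycle-neighbours -/
private lemma two_cycle_nbrs [DecidableEq V] {G : SimpleGraph V} {v : V} {c : G.Walk v v} (hc : c.IsCycle)
    {u : V} (hu : u ∈ c.support) :
    ∃ a b : V, a ≠ b ∧ s(u, a) ∈ c.edges ∧ s(u, b) ∈ c.edges := by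
  set c' := c.rotate u hu with hc'def
  have hc' : c'.IsCycle := hc.rotate hu
  have h3 : 3 ≤ c'.length := hc'.three_le_length
  have hmem : ∀ e, e ∈ c'.edges → e ∈ c.edges := fun e he =>
    (c.rotate_edges u hu).perm.mem_iff.mp he
  have h0 : (0 : ℕ) < c'.length := by omega
  have hn1 : c'.length - 1 < c'.length := by omega
  have e0 := edges_getElem_aux c' 0 h0
  have e1 := edges_getElem_aux c' (c'.length - 1) hn1
  rw [c'.getVert_zero] at e0
  rw [show c'.length - 1 + 1 = c'.length by omega, c'.getVert_length] at e1
  refine ⟨c'.getVert 1, c'.getVert (c'.length - 1), ?_, ?_, ?_⟩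
  · intro hab
    have hnd : c'.edges.Nodup := hc'.isTrail.edges_nodup
    have : c'.edges[0]'(by rw [c'.length_edges]; exact h0) =
        c'.edges[c'.length - 1]'(by rw [c'.length_edges]; exact hn1) := by
      rw [e0, e1, hab, Sym2.eq_swap]
    have := (List.Nodup.getElem_inj_iff hnd).mp this
    omega
  · exact hmem _ (e0 ▸ List.getElem_mem _)
  · have : s(c'.getVert (c'.length-1), u) ∈ c'.edges := e1 ▸ List.getElem_mem _
    rw [Sym2.eq_swap] at this
    exact hmem _ this

private lemma tree_nbr_unique [Finite V] [DecidableEq V] {G T : SimpleGraph V}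
    (hTG : T ≤ G) (hcubic : IsCubic G)
    {v : V} {c : G.Walk v v} (hc : c.IsCycle)
    (hT : ∀ e ∈ c.edges, e ∉ T.edgeSet)
    {u w : V} (hu : u ∈ c.support) (huw : G.Adj u w) (hne : s(u, w) ∉ c.edges) :
    ∀ x : V, T.Adj u x → x = w := by
  obtain ⟨a, b, hab, ha, hb⟩ := two_cycle_nbrs hc hu
  have haG : G.Adj u a := c.adj_of_mem_edges ha
  have hbG : G.Adj u b := c.adj_of_mem_edges hb
  have haw : a ≠ w := fun h => hne (h ▸ ha)
  have hbw : b ≠ w := fun h => hne (h ▸ hb)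
  have hset : ({w, a, b} : Set V) = G.neighborSet u := by
    apply Set.eq_of_subset_of_ncard_le
    · rintro x (rfl | rfl | rfl)
      · exact huw
      · exact haG
      · exact hbG
    · rw [hcubic u]
      rw [Set.ncard_insert_of_notMem (by simp [haw.symm, hbw.symm]),
        Set.ncard_insert_of_notMem (by simp [hab]), Set.ncard_singleton]
    · exact Set.toFinite _
  intro x hx
  have hxG : x ∈ G.neighborSet u := hTG hx
  rw [← hset] at hxG
  rcases hxG with rfl | rfl | rfl
  · rfl
  · exact absurd (T.mem_edgeSet.mpr hx) (hT _ ha)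
  · exact absurd (T.mem_edgeSet.mpr hx) (hT _ hb)

/-- Lemma 2(i): in a connected claw-free cubic graph with a good decomposition `{T, M, O}`,
every cycle avoiding the spanning tree `T` that is not a triangle is chordless: every edge
of `G` joining two vertices of the cycle is an edge of the cycle. -/
theorem cycle_avoiding_tree_chordless [Fintype V] (G T M O : SimpleGraph V)
    (hconn : G.Connected) (hclaw : IsClawFree G) (hcubic : IsCubic G)
    (hgood : IsGoodDecomposition G T M O)
    {v : V} (c : G.Walk v v) (hc : c.IsCycle)
    (hT : ∀ e ∈ c.edges, e ∉ T.edgeSet)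
    (htri : c.length ≠ 3) :
    ∀ u w : V, u ∈ c.support → w ∈ c.support → G.Adj u w → s(u, w) ∈ c.edges := by
  classical
  intro u w hu hw huw
  by_contra hne
  obtain ⟨hTG, hMG, hOG, hTtree, _⟩ := hgood
  have key_u : ∀ x : V, T.Adj u x → x = w :=
    tree_nbr_unique hTG hcubic hc hT hu huw hne
  have key_w : ∀ x : V, T.Adj w x → x = u :=
    tree_nbr_unique hTG hcubic hc hT hw huw.symm (by rwa [Sym2.eq_swap])
  -- any T-walk starting in {u, w} stays in {u, w}
  have closure : ∀ {x y : V}, T.Walk x y → (x = u ∨ x = w) → (y = u ∨ y = w) := by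
    intro x y p
    induction p with
    | nil => exact id
    | cons h q ih =>
      rintro (rfl | rfl)
      · exact ih (Or.inr (key_u _ h))
      · exact ih (Or.inl (key_w _ h))
  -- a cycle-neighbour of u is not in {u, w}
  obtain ⟨a, b, hab, ha, hb⟩ := two_cycle_nbrs hc hu
  have haG : G.Adj u a := c.adj_of_mem_edges ha
  obtain ⟨p⟩ := hTtree.isConnected.preconnected u a
  rcases closure p (Or.inl rfl) with rfl | rfl
  · exact haG.ne rfl
  · exact hne ha
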